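/- No sequence has all prefixes incompressible: there exists a constant c such that for every infinite binary sequence χ : ℕ → Bool there are infinitely many n with K(χ↾n) ≤ n − log₂ n + c, where χ↾n denotes the binary string of the first n bits of χ. -/

import Mathlib

/-- Plain Kolmogorov complexity of `x` with respect to decompressor `D`. -/
noncomputable def Kc (D : List Bool →. List Bool) (x : List Bool) : ℕ∞ :=
  sInf {n : ℕ∞ | ∃ p : List Bool, x ∈ D p ∧ (p.length : ℕ∞) = n}

/-- `U` is an optimal decompressor. -/
def OptimalDecompressor (U : List Bool →. List Bool) : Prop :=
  Partrec U ∧ ∀ D : List Bool →. List Bool, Partrec D →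
    ∃ c : ℕ, ∀ x : List Bool, Kc U x ≤ Kc D x + (c : ℕ∞)

/- Auxiliary development: a positional bijection between strings and numbers. -/

/-- `nuv s` is one plus the index of `s` in length-lexicographic order:
`nuv s = 2^|s| + value(s)`. -/
def nuv (s : List Bool) : ℕ := s.foldr (fun b n => 2 * n + cond b 1 0) 1

@[simp] lemma nuv_nil : nuv [] = 1 := rfl

@[simp] lemma nuv_cons (b : Bool) (s : List Bool) :
    nuv (b :: s) = 2 * nuv s + cond b 1 0 := rfl

lemma nuv_lb (s : List Bool) : 2 ^ s.length ≤ nuv s := by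
  induction s with
  | nil => simp
  | cons b s ih => simp [pow_succ]; cases b <;> simp <;> omega

lemma nuv_ub (s : List Bool) : nuv s < 2 ^ (s.length + 1) := by
  induction s with
  | nil => simp
  | cons b s ih =>
    have : 2 ^ (s.length + 1 + 1) = 2 * 2 ^ (s.length + 1) := by ring
    rw [nuv_cons, List.length_cons, this]
    cases b <;> simp <;> omega

/-- Inverse of `fun s => nuv s - 1`. -/
def nuinv : ℕ → List Bool
  | 0 => []
  | (m + 1) => decide (m % 2 = 1) :: nuinv (m / 2)
  decreasing_by exact Nat.lt_succ_of_le (Nat.div_le_self m 2)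

lemma nuinv_succ (m : ℕ) : nuinv (m + 1) = decide (m % 2 = 1) :: nuinv (m / 2) := by
  rw [nuinv]

lemma one_le_nuv (s : List Bool) : 1 ≤ nuv s :=
  le_trans (Nat.one_le_two_pow) (nuv_lb s)

lemma nuinv_nuv (s : List Bool) : nuinv (nuv s - 1) = s := by
  induction s with
  | nil => simp [nuinv]
  | cons b s ih =>
    have h1 : 1 ≤ nuv s := one_le_nuv s
    cases b
    · have : nuv (false :: s) - 1 = (2 * (nuv s - 1)) + 1 := by simp; omega
      rw [this, nuinv_succ]
      have h2 : 2 * (nuv s - 1) % 2 = 0 := by omega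
      have h3 : 2 * (nuv s - 1) / 2 = nuv s - 1 := by omega
      simp [h2, h3, ih]
    · have : nuv (true :: s) - 1 = (2 * (nuv s - 1) + 1) + 1 := by simp; omega
      rw [this, nuinv_succ]
      have h2 : (2 * (nuv s - 1) + 1) % 2 = 1 := by omega
      have h3 : (2 * (nuv s - 1) + 1) / 2 = nuv s - 1 := by omega
      simp [h2, h3, ih]

lemma nuv_nuinv (j : ℕ) : nuv (nuinv j) = j + 1 := by
  induction j using Nat.strong_induction_on with
  | _ j ih =>
    match j with
    | 0 => simp [nuinv]
    | (m + 1) =>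
      rw [nuinv_succ, nuv_cons, ih (m / 2) (by omega)]
      have : cond (decide (m % 2 = 1)) 1 0 = m % 2 := by
        rcases Nat.mod_two_eq_zero_or_one m with h | h <;> simp [h]
      omega

/- Computability of `nuinv` via a fuelled iteration. -/

/-- One step of the computation of `nuinv`. -/
def nustep : ℕ × List Bool → ℕ × List Bool :=
  fun p => if p.1 = 0 then p else ((p.1 - 1) / 2, p.2 ++ [decide ((p.1 - 1) % 2 = 1)])

lemma nustep_iter : ∀ m f acc, m ≤ f → (nustep^[f] (m, acc)).2 = acc ++ nuinv m
  | 0, f, acc, _ => by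
    have h : nustep^[f] (0, acc) = (0, acc) := by
      induction f with
      | zero => rfl
      | succ f ihf =>
        rw [Function.iterate_succ_apply, show nustep (0, acc) = (0, acc) from rfl,
          ihf (Nat.zero_le f)]
    simp [h, nuinv]
  | (m + 1), f, acc, h => by
    obtain ⟨f', rfl⟩ : ∃ f', f = f' + 1 := ⟨f - 1, by omega⟩
    rw [Function.iterate_succ_apply]
    have hs : nustep (m + 1, acc) = (m / 2, acc ++ [decide (m % 2 = 1)]) := by
      simp [nustep]
    rw [hs, nustep_iter (m / 2) f' _ (by omega), nuinv_succ]
    simp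
  termination_by m => m
  decreasing_by exact Nat.lt_succ_of_le (Nat.div_le_self m 2)

lemma nuinv_eq_iter (m : ℕ) : nuinv m = (nustep^[m] (m, [])).2 := by
  rw [nustep_iter m m [] le_rfl]; simp

lemma primrec_nustep : Primrec nustep := by
  apply Primrec.ite (Primrec.eq.comp Primrec.fst (Primrec.const 0)) Primrec.id
  apply Primrec.pair
  · exact Primrec.nat_div.comp (Primrec.nat_sub.comp Primrec.fst (Primrec.const 1))
      (Primrec.const 2)
  · exact Primrec.list_append.comp Primrec.snd
      (Primrec.list_cons.comp
        (PrimrecPred.decide (Primrec.eq.comp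
          (Primrec.nat_mod.comp (Primrec.nat_sub.comp Primrec.fst (Primrec.const 1))
            (Primrec.const 2))
          (Primrec.const 1)))
        (Primrec.const []))

lemma primrec_nuinv : Primrec nuinv := by
  have h : Primrec fun m : ℕ => (nustep^[m] ((m, []) : ℕ × List Bool)).2 :=
    Primrec.snd.comp
      (Primrec.nat_iterate Primrec.id (Primrec.pair Primrec.id (Primrec.const []))
        ((primrec_nustep.comp Primrec.snd).to₂))
  exact h.of_eq fun m => (nuinv_eq_iter m).symm

/-- The decompressor: `F (b :: q)` reconstructs the length-information prefix
from `|q|` (helped by the bit `b`) and prepends it to `q`. -/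
def Fdec : List Bool → List Bool
  | [] => []
  | b :: q => nuinv (q.length + (nuinv q.length).length + cond b 1 0) ++ q

lemma primrec_Fdec : Primrec Fdec := by
  have hbig : Primrec fun x : List Bool × Bool × List Bool =>
      nuinv (x.2.2.length + (nuinv x.2.2.length).length + cond x.2.1 1 0) ++ x.2.2 := by
    have hq : Primrec fun x : List Bool × Bool × List Bool => x.2.2 :=
      Primrec.snd.comp Primrec.snd
    have hb : Primrec fun x : List Bool × Bool × List Bool => x.2.1 :=
      Primrec.fst.comp Primrec.snd
    have hlen : Primrec fun x : List Bool × Bool × List Bool => x.2.2.length :=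
      Primrec.list_length.comp hq
    have harg : Primrec fun x : List Bool × Bool × List Bool =>
        x.2.2.length + (nuinv x.2.2.length).length + cond x.2.1 1 0 :=
      Primrec.nat_add.comp
        (Primrec.nat_add.comp hlen (Primrec.list_length.comp (primrec_nuinv.comp hlen)))
        (Primrec.cond hb (Primrec.const 1) (Primrec.const 0))
    exact Primrec.list_append.comp (primrec_nuinv.comp harg) hq
  have hh : Primrec₂ fun (_ : List Bool) (bq : Bool × List Bool) =>
      nuinv (bq.2.length + (nuinv bq.2.length).length + cond bq.1 1 0) ++ bq.2 := hbig.to₂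
  have h := Primrec.list_casesOn Primrec.id (Primrec.const ([] : List Bool)) hh
  exact h.of_eq fun p => by cases p <;> rfl

/-- No sequence has all prefixes incompressible: there is a constant `c` such
that every infinite binary sequence `χ` has infinitely many `n` with
`K(χ↾n) ≤ n − log₂ n + c` (stated additively as `K(χ↾n) + log₂ n ≤ n + c`,
which avoids truncated subtraction). -/
theorem infinitely_many_compressible_prefixes
    (U : List Bool →. List Bool) (hU : OptimalDecompressor U) :
    ∃ c : ℕ, ∀ χ : ℕ → Bool, ∀ m : ℕ, ∃ n : ℕ, m ≤ n ∧
      Kc U ((List.range n).map χ) + ((Nat.log 2 n : ℕ) : ℕ∞) ≤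
        ((n + c : ℕ) : ℕ∞) := by
  classical
  set D : List Bool →. List Bool := fun p => Part.some (Fdec p) with hD
  have hDpr : Partrec D := Computable.partrec (primrec_Fdec.to_comp)
  obtain ⟨c, hc⟩ := hU.2 D hDpr
  refine ⟨c + 1, fun χ m => ?_⟩
  -- choose the prefix length `l` and the target length `n`
  set l : ℕ := m + 1 with hl
  set s : List Bool := (List.range l).map χ with hs
  have hslen : s.length = l := by simp [hs]
  set n : ℕ := nuv s - 1 with hn
  have h1 : 1 ≤ nuv s := one_le_nuv s
  have hlb : 2 ^ l ≤ nuv s := by rw [← hslen]; exact nuv_lb s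
  have hub : nuv s < 2 ^ (l + 1) := by rw [← hslen]; exact nuv_ub s
  have hl2 : l < 2 ^ l := Nat.lt_two_pow_self
  have hln : l ≤ n := by omega
  have hmn : m ≤ n := by omega
  refine ⟨n, hmn, ?_⟩
  set x : List Bool := (List.range n).map χ with hx
  set q : List Bool := x.drop l with hq
  have hqlen : q.length = n - l := by simp [hq, hx]
  have hsplit : x = s ++ q := by
    conv_lhs => rw [← List.take_append_drop l x]
    congr 1
    rw [hx, ← List.map_take, List.take_range, min_eq_left hln]
  set k : ℕ := n - l with hk
  set Lk : ℕ := (nuinv k).length with hLk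
  -- `Lk ∈ {l - 1, l}`
  have hnk : nuv (nuinv k) = k + 1 := nuv_nuinv k
  have hklb : 2 ^ Lk ≤ k + 1 := by rw [← hLk] at *; rw [← hnk]; exact nuv_lb _
  have hkub : k + 1 < 2 ^ (Lk + 1) := by rw [← hnk]; exact nuv_ub _
  have hpredpow : l ≤ 2 ^ m := by
    have := Nat.lt_two_pow_self (n := m)
    omega
  have h2l : 2 ^ l = 2 ^ m * 2 := by rw [hl, pow_succ]
  have hage : 2 ^ m ≤ k + 1 := by omega
  have hkup : k + 1 < 2 ^ (l + 1) := by omega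
  have hLk_le : Lk ≤ l := by
    have : 2 ^ Lk < 2 ^ (l + 1) := lt_of_le_of_lt hklb hkup
    have := (Nat.pow_lt_pow_iff_right (a := 2) one_lt_two).mp this
    omega
  have hLk_ge : l - 1 ≤ Lk := by
    have : 2 ^ m < 2 ^ (Lk + 1) := lt_of_le_of_lt hage hkub
    have := (Nat.pow_lt_pow_iff_right (a := 2) one_lt_two).mp this
    omega
  -- the helper bit
  set b : Bool := decide (l = Lk + 1) with hb
  have hbit : Lk + cond b 1 0 = l := by
    rcases eq_or_ne l (Lk + 1) with h | h
    · simp [hb, h]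
    · have : l = Lk := by omega
      simp [hb, h, this]
  -- the program
  set p : List Bool := b :: q with hp
  have hF : Fdec p = x := by
    have hFp : Fdec p = nuinv (q.length + (nuinv q.length).length + cond b 1 0) ++ q := rfl
    have harg : q.length + (nuinv q.length).length + cond b 1 0 = n := by
      rw [hqlen, ← hLk]
      generalize hδ : cond b 1 0 = δ at hbit ⊢
      omega
    rw [hFp, harg]
    have hns : nuinv n = s := by rw [hn, nuinv_nuv]
    rw [hns, ← hsplit]
  have hplen : p.length = k + 1 := by simp [hp, hqlen]
  -- complexity bound for `D`
  have hKD : Kc D x ≤ ((k + 1 : ℕ) : ℕ∞) := by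
    apply sInf_le
    exact ⟨p, Part.mem_some_iff.mpr hF.symm, by rw [hplen]⟩
  have hlog : Nat.log 2 n ≤ l := by
    have hn0 : n ≠ 0 := by omega
    have : n < 2 ^ (l + 1) := by omega
    have := Nat.log_lt_of_lt_pow hn0 this
    omega
  calc Kc U x + ((Nat.log 2 n : ℕ) : ℕ∞)
      ≤ (Kc D x + (c : ℕ∞)) + ((Nat.log 2 n : ℕ) : ℕ∞) := by
        exact add_le_add_left (hc x) _
    _ ≤ (((k + 1 : ℕ) : ℕ∞) + (c : ℕ∞)) + ((Nat.log 2 n : ℕ) : ℕ∞) := by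
        exact add_le_add_left (add_le_add_left hKD _) _
    _ = (((k + 1) + c + Nat.log 2 n : ℕ) : ℕ∞) := by push_cast; ring
    _ ≤ ((n + (c + 1) : ℕ) : ℕ∞) := by
        apply Nat.cast_le.mpr
        omega
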